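/- arXiv:1402.4659 — 4 statements merged into one kernel-verified Lean document; each statement's English description precedes it below -/
import Mathlib

section
/- Let S ⊆ ω₁, let h and p be Baumgartner conditions (elements of P_S^B), let β = max(dom p), and suppose β ∈ dom h and that p extends the restriction of h to β+1, i.e. for every γ ∈ dom h with γ ≤ β one has γ ∈ dom p and p(γ) = h(γ). Then the union h ∪ p is again an element of P_S^B. (This is the combinatorial core of the lemma that each f ∈ P_S^B forces that the generic filter intersected with (P_S^B)_f = {g ∈ P_S^B : g ≤ f and max(dom g) = max(dom f)} is generic for (P_S^B)_f.) -/
/-- The first uncountable ordinal ω₁. -/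
noncomputable def omegaOne : Ordinal := (Cardinal.aleph 1).ord

/-- `g` is a strictly increasing continuous function from (the ordinals below) `α` into `S`. -/
def IsBaumWitness (S : Set Ordinal) (α : Ordinal) (g : Ordinal → Ordinal) : Prop :=
  (∀ β < α, g β ∈ S) ∧ StrictMonoOn g (Set.Iio α) ∧
    ∀ l < α, Order.IsSuccLimit l → g l = sSup (g '' Set.Iio l)

/-- The finite partial function with domain `D` and values `f` is a Baumgartner condition
in `P_S^B`: it is a finite partial function from ω₁ to `S`, and there are an ordinal `α`
greater than every element of `D` (i.e. `α > max (dom f)`) and a strictly increasing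
continuous `g : α → S` agreeing with `f` on `D`. -/
def InPB (S : Set Ordinal) (D : Finset Ordinal) (f : Ordinal → Ordinal) : Prop :=
  (∀ β ∈ D, β < omegaOne ∧ f β ∈ S) ∧
    ∃ α, (∀ β ∈ D, β < α) ∧ ∃ g : Ordinal → Ordinal,
      IsBaumWitness S α g ∧ ∀ β ∈ D, g β = f β

/-- Let `S ⊆ ω₁`, let `h` and `p` (with domains `Dh`, `Dp`) be Baumgartner
conditions, let `β = max (dom p)`, suppose `β ∈ dom h`, and suppose `p` extends the
restriction of `h` to `β + 1` (every `γ ∈ dom h` with `γ ≤ β` lies in `dom p` and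
`p γ = h γ`). Then the union `h ∪ p` (domain `Dh ∪ Dp`, taking the value of `p` on `Dp`
and of `h` elsewhere) is again an element of `P_S^B`. -/
theorem union_of_compatible_baumgartner_conditions
    (S : Set Ordinal) (hS : ∀ x ∈ S, x < omegaOne)
    (Dh Dp : Finset Ordinal) (h p : Ordinal → Ordinal)
    (hhPB : InPB S Dh h) (hpPB : InPB S Dp p)
    (hDp : Dp.Nonempty) (β : Ordinal) (hβ : β = Dp.max' hDp)
    (hβh : β ∈ Dh)
    (hext : ∀ γ ∈ Dh, γ ≤ β → γ ∈ Dp ∧ p γ = h γ) :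
    InPB S (Dh ∪ Dp) (fun γ => if γ ∈ Dp then p γ else h γ) := by
  obtain ⟨hh1, αh, hαh, gh, ⟨ghS, ghmono, ghcont⟩, ghagree⟩ := hhPB
  obtain ⟨hp1, αp, hαp, gp, ⟨gpS, gpmono, gpcont⟩, gpagree⟩ := hpPB
  have hβp : β ∈ Dp := (hext β hβh le_rfl).1
  have hpq : p β = h β := (hext β hβh le_rfl).2
  have hβαp : β < αp := hαp β hβp
  have hβαh : β < αh := hαh β hβh
  have hle : ∀ γ ∈ Dp, γ ≤ β := fun γ hγ => hβ ▸ Finset.le_max' Dp γ hγ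
  have key : gp β = gh β := by rw [gpagree β hβp, ghagree β hβh, hpq]
  set g : Ordinal → Ordinal := fun γ => if γ ≤ β then gp γ else gh γ with hg
  refine ⟨?_, αh, ?_, g, ⟨?_, ?_, ?_⟩, ?_⟩
  · intro γ hγ
    rcases Finset.mem_union.1 hγ with hγ | hγ
    · by_cases hmem : γ ∈ Dp
      · simpa [hmem] using hp1 γ hmem
      · simpa [hmem] using hh1 γ hγ
    · simpa [hγ] using hp1 γ hγ
  · intro γ hγ
    rcases Finset.mem_union.1 hγ with hγ | hγ
    · exact hαh γ hγ
    · exact lt_of_le_of_lt (hle γ hγ) hβαh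
  · intro γ hγ
    by_cases hc : γ ≤ β
    · simpa [hg, hc] using gpS γ (lt_of_le_of_lt hc hβαp)
    · simpa [hg, hc] using ghS γ hγ
  · intro x hx y hy hxy
    simp only [hg]
    by_cases hxb : x ≤ β
    · by_cases hyb : y ≤ β
      · simpa [hxb, hyb] using
          gpmono (Set.mem_Iio.2 (lt_of_le_of_lt hxb hβαp))
            (Set.mem_Iio.2 (lt_of_le_of_lt hyb hβαp)) hxy
      · simp only [hxb, hyb, if_true, if_false]
        calc gp x ≤ gp β := gpmono.monotoneOn (Set.mem_Iio.2 (lt_of_le_of_lt hxb hβαp))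
              (Set.mem_Iio.2 hβαp) hxb
          _ = gh β := key
          _ < gh y := ghmono (Set.mem_Iio.2 hβαh) hy (not_le.1 hyb)
    · have hyb : ¬ y ≤ β := fun hc => hxb (le_trans (le_of_lt hxy) hc)
      simp only [hxb, hyb, if_false]
      exact ghmono hx hy hxy
  · intro l hl hlim
    by_cases hc : l ≤ β
    · have him : g '' Set.Iio l = gp '' Set.Iio l := by
        apply Set.image_congr
        intro a ha
        simp [hg, le_of_lt (lt_of_lt_of_le (Set.mem_Iio.1 ha) hc)]
      rw [him]
      simp only [hg, hc, if_true]
      exact gpcont l (lt_of_le_of_lt hc hβαp) hlim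
    · have hβl : β < l := not_le.1 hc
      have hne : (Set.Iio l).Nonempty := ⟨0, hlim.pos⟩
      have hbdd_gh : BddAbove (gh '' Set.Iio l) := by
        refine ⟨gh l, ?_⟩
        rintro _ ⟨γ, hγ, rfl⟩
        exact ghmono.monotoneOn (Set.mem_Iio.2 (lt_trans hγ hl)) (Set.mem_Iio.2 hl)
          (le_of_lt hγ)
      have hbdd_g : BddAbove (g '' Set.Iio l) := by
        refine ⟨gh l, ?_⟩
        rintro _ ⟨γ, hγ, rfl⟩
        by_cases hγb : γ ≤ β
        · simp only [hg, hγb, if_true]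
          calc gp γ ≤ gp β := gpmono.monotoneOn (Set.mem_Iio.2 (lt_of_le_of_lt hγb hβαp))
                (Set.mem_Iio.2 hβαp) hγb
            _ = gh β := key
            _ ≤ gh l := ghmono.monotoneOn (Set.mem_Iio.2 hβαh) (Set.mem_Iio.2 hl)
                (le_of_lt hβl)
        · simp only [hg, hγb, if_false]
          exact ghmono.monotoneOn (Set.mem_Iio.2 (lt_trans hγ hl)) (Set.mem_Iio.2 hl)
            (le_of_lt hγ)
      have hsup : sSup (g '' Set.Iio l) = sSup (gh '' Set.Iio l) := by
        apply le_antisymm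
        · apply csSup_le (hne.image g)
          rintro _ ⟨γ, hγ, rfl⟩
          by_cases hγb : γ ≤ β
          · simp only [hg, hγb, if_true]
            calc gp γ ≤ gp β := gpmono.monotoneOn
                  (Set.mem_Iio.2 (lt_of_le_of_lt hγb hβαp)) (Set.mem_Iio.2 hβαp) hγb
              _ = gh β := key
              _ ≤ sSup (gh '' Set.Iio l) := le_csSup hbdd_gh ⟨β, Set.mem_Iio.2 hβl, rfl⟩
          · simp only [hg, hγb, if_false]
            exact le_csSup hbdd_gh ⟨γ, hγ, rfl⟩
        · apply csSup_le (hne.image gh)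
          rintro _ ⟨γ, hγ, rfl⟩
          by_cases hγb : γ ≤ β
          · calc gh γ ≤ gh β := ghmono.monotoneOn
                  (Set.mem_Iio.2 (lt_of_le_of_lt hγb hβαh)) (Set.mem_Iio.2 hβαh) hγb
              _ = g β := by simp [hg, key]
              _ ≤ sSup (g '' Set.Iio l) := le_csSup hbdd_g ⟨β, Set.mem_Iio.2 hβl, rfl⟩
          · have : gh γ = g γ := by simp [hg, hγb]
            rw [this]
            exact le_csSup hbdd_g ⟨γ, hγ, rfl⟩
      rw [hsup]
      simp only [hg, hc, if_false]
      exact ghcont l hl hlim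
  · intro γ hγ
    by_cases hmem : γ ∈ Dp
    · simp only [hg, hmem, if_true, hle γ hmem]
      exact gpagree γ hmem
    · rcases Finset.mem_union.1 hγ with hγh | hγp
      · have hγb : ¬ γ ≤ β := fun hc => hmem (hext γ hγh hc).1
        simp only [hg, hmem, hγb, if_false]
        exact ghagree γ hγh
      · exact absurd hγp hmem
end

section
/- Let S ⊆ ω₁, let η ∈ S be an additively indecomposable ordinal (i.e., α + β < η for all ordinals α, β < η), and suppose the single-point function f = {(η, η)} belongs to P_S^B, i.e. there is a strictly increasing continuous E : η+1 → S with E(η) = η. Then (P_S^B)_f = { g ∪ {(η,η)} : g ∈ P_S^B and dom(g) ∪ ran(g) ⊆ η }, where (P_S^B)_f = {h ∈ P_S^B : h ⊇ f and max(dom h) = η}. In particular, for every g ∈ P_S^B with dom(g) ∪ ran(g) ⊆ η there exists a strictly increasing continuous H : η+1 → S ∩ (η+1) with H(η) = η and H(β) = g(β) for all β ∈ dom g. -/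
lemma baum_key (S : Set Ordinal) (η : Ordinal) (hηS : η ∈ S)
    (hind : ∀ α < η, ∀ β < η, α + β < η)
    (E : Ordinal → Ordinal) (hE : IsBaumWitness S (η + 1) E) (hEη : E η = η)
    (Dg : Finset Ordinal) (g : Ordinal → Ordinal) (hg : InPB S Dg g)
    (hb : ∀ β ∈ Dg, β < η ∧ g β < η) :
    ∃ H : Ordinal → Ordinal, IsBaumWitness S (η + 1) H ∧ (∀ β ≤ η, H β ≤ η) ∧
      H η = η ∧ ∀ β ∈ Dg, H β = g β := by
  have hsucc : ∀ x : Ordinal, x < η + 1 ↔ x ≤ η := by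
    intro x; rw [Ordinal.add_one_eq_succ, Order.lt_succ_iff]
  have hEle : ∀ β ≤ η, E β ≤ η := by
    intro β hβ
    rcases eq_or_lt_of_le hβ with rfl | hβ
    · exact hEη.le
    · exact le_of_lt (hEη ▸ hE.2.1 ((hsucc β).2 hβ.le) ((hsucc η).2 le_rfl) hβ)
  rcases Finset.eq_empty_or_nonempty Dg with rfl | hne
  · exact ⟨E, hE, hEle, hEη, by simp⟩
  obtain ⟨hdom, α, hα, G, hG, hGg⟩ := hg
  set μ := Dg.max' hne with hμdef
  have hμD : μ ∈ Dg := Dg.max'_mem hne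
  have hμη : μ < η := (hb μ hμD).1
  have hμα : μ < α := hα μ hμD
  have hGμ : G μ < η := by rw [hGg μ hμD]; exact (hb μ hμD).2
  rcases Ordinal.zero_or_succ_or_isSuccLimit η with hη0 | ⟨γ, hγ⟩ | hlim
  · exact absurd hμη (by simp [hη0])
  · -- η is a successor; by indecomposability η = 1
    have hγ : η = Order.succ γ := hγ.symm
    have hη1 : η = 1 := by
      by_contra hη1
      have hγ0 : γ ≠ 0 := by rintro rfl; exact hη1 (by simp [hγ])
      have h1 : (1 : Ordinal) < η := by
        rw [hγ, ← Order.succ_le_iff, Order.succ_le_succ_iff, Ordinal.one_le_iff_ne_zero]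
        exact hγ0
      have := hind γ (hγ ▸ Order.lt_succ γ) 1 h1
      rw [← Ordinal.add_one_eq_succ] at hγ
      exact absurd this (by rw [← hγ]; exact lt_irrefl _)
    subst hη1
    have hall : ∀ β ∈ Dg, β = 0 ∧ g β = 0 := by
      intro β hβ
      exact ⟨Ordinal.lt_one_iff_zero.1 (hb β hβ).1, Ordinal.lt_one_iff_zero.1 (hb β hβ).2⟩
    have h0S : (0 : Ordinal) ∈ S := by
      have := (hdom μ hμD).2
      rwa [(hall μ hμD).2] at this
    refine ⟨id, ⟨?_, fun a _ b _ h => h, ?_⟩, fun β h => h, rfl, ?_⟩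
    · intro β hβ
      rcases Ordinal.le_one_iff.1 ((hsucc β).1 hβ) with rfl | rfl
      · exact h0S
      · exact hηS
    · intro l hl hlim
      exact absurd (lt_of_lt_of_le (Ordinal.one_lt_of_isSuccLimit hlim) ((hsucc l).1 hl)) (lt_irrefl _)
    · intro β hβ
      rcases hall β hβ with ⟨rfl, h2⟩
      exact h2.symm
  · -- main case: η is a limit
    have haddη : ∀ a < η, a + η = η := fun a ha =>
      le_antisymm ((Ordinal.add_le_iff_of_isSuccLimit hlim).2 fun b hb => (hind a ha b hb).le)
        (le_add_self (a := η) (b := a))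
    -- find ν < η with G μ < E ν
    have hsup : sSup (E '' Set.Iio η) = η := by
      rw [← hE.2.2 η ((hsucc η).2 le_rfl) hlim, hEη]
    obtain ⟨x, hx, hGx⟩ :=
      exists_lt_of_lt_csSup (⟨E 0, ⟨0, hlim.pos, rfl⟩⟩ : (E '' Set.Iio η).Nonempty)
        (show G μ < sSup (E '' Set.Iio η) by rw [hsup]; exact hGμ)
    obtain ⟨ν, hνη, rfl⟩ := hx
    have hν : ν < η := hνη
    set H : Ordinal → Ordinal := fun β => if β ≤ μ then G β else E (ν + (β - (μ + 1))) with hH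
    have hμ1η : μ + 1 < η := by
      rw [Ordinal.add_one_eq_succ]; exact hlim.succ_lt hμη
    have hsplit : ∀ β, μ < β → (μ + 1) + (β - (μ + 1)) = β := by
      intro β h
      exact Ordinal.add_sub_cancel_of_le (by rwa [Ordinal.add_one_eq_succ, Order.succ_le_iff])
    have hξη : ν + (η - (μ + 1)) = η := by
      have h1 : η - (μ + 1) = η := by
        conv_lhs => rw [← haddη (μ + 1) hμ1η]
        rw [Ordinal.add_sub_cancel]
      rw [h1]; exact haddη ν hν
    have hξlt : ∀ β, β < η → ν + (β - (μ + 1)) < η := fun β h =>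
      hind ν hν _ (lt_of_le_of_lt (Ordinal.sub_le_self β (μ + 1)) h)
    have hξle : ∀ β, β ≤ η → ν + (β - (μ + 1)) ≤ η := by
      intro β h
      rcases eq_or_lt_of_le h with rfl | h
      · exact hξη.le
      · exact (hξlt β h).le
    have hξmono : ∀ β1 β2, μ < β1 → β1 < β2 → ν + (β1 - (μ + 1)) < ν + (β2 - (μ + 1)) := by
      intro β1 β2 h1 h12
      have : (μ + 1) + (β1 - (μ + 1)) < (μ + 1) + (β2 - (μ + 1)) := by
        rw [hsplit β1 h1, hsplit β2 (h1.trans h12)]; exact h12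
      exact (add_lt_add_iff_left ν).2 ((add_lt_add_iff_left (μ + 1)).1 this)
    have hGle : ∀ β ≤ μ, G β ≤ G μ :=
      fun β h => hG.2.1.monotoneOn (lt_of_le_of_lt h hμα) hμα h
    have hGltE : ∀ β ≤ μ, ∀ ξ, ν + ξ ≤ η → G β < E (ν + ξ) := by
      intro β hβ ξ hξ
      refine lt_of_le_of_lt (hGle β hβ) (lt_of_lt_of_le hGx ?_)
      exact hE.2.1.monotoneOn ((hsucc ν).2 hν.le) ((hsucc _).2 hξ) (le_self_add (a := ν) (b := ξ))
    have hHle : ∀ β ≤ η, H β ≤ η := by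
      intro β hβ
      by_cases h : β ≤ μ
      · simp only [hH, if_pos h]; exact ((hGle β h).trans_lt hGμ).le
      · simp only [hH, if_neg h]; exact hEle _ (hξle β hβ)
    have hHη : H η = η := by
      simp only [hH, if_neg (not_le.2 hμη), hξη, hEη]
    refine ⟨H, ⟨?_, ?_, ?_⟩, hHle, hHη, ?_⟩
    · -- values in S
      intro β hβ
      by_cases h : β ≤ μ
      · simp only [hH, if_pos h]; exact hG.1 β (lt_of_le_of_lt h hμα)
      · simp only [hH, if_neg h]
        exact hE.1 _ ((hsucc _).2 (hξle β ((hsucc β).1 hβ)))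
    · -- strict mono
      intro a ha b hb hab
      by_cases ha' : a ≤ μ
      · by_cases hb' : b ≤ μ
        · simp only [hH, if_pos ha', if_pos hb']
          exact hG.2.1 (lt_of_le_of_lt ha' hμα) (lt_of_le_of_lt hb' hμα) hab
        · simp only [hH, if_pos ha', if_neg hb']
          exact hGltE a ha' _ (hξle b ((hsucc b).1 hb))
      · have hb' : ¬ b ≤ μ := fun h => ha' (hab.le.trans h)
        simp only [hH, if_neg ha', if_neg hb']
        exact hE.2.1 ((hsucc _).2 (hξle a ((hsucc a).1 ha)))
          ((hsucc _).2 (hξle b ((hsucc b).1 hb))) (hξmono a b (not_le.1 ha') hab)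
    · -- continuity at limits
      intro l hl hlLim
      by_cases hl' : l ≤ μ
      · have h1 : H l = G l := by simp only [hH, if_pos hl']
        have h2 : G '' Set.Iio l = H '' Set.Iio l := by
          apply Set.image_congr
          intro a ha
          simp only [hH, if_pos (le_of_lt (lt_of_lt_of_le ha hl'))]
        rw [h1, hG.2.2 l (lt_of_le_of_lt hl' hμα) hlLim, h2]
      · have hμl : μ < l := not_le.1 hl'
        have hlη : l ≤ η := (hsucc l).1 hl
        set ξl := l - (μ + 1) with hξldef
        have hξlim : Order.IsSuccLimit ξl := by
          have := hlLim
          rw [← hsplit l hμl] at this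
          rcases Ordinal.isSuccLimit_add_iff.1 this with h | ⟨h0, hsl⟩
          · exact h
          · exact absurd (Ordinal.add_one_eq_succ μ ▸ hsl) (Order.not_isSuccLimit_succ μ)
        have hνξlim : Order.IsSuccLimit (ν + ξl) := Ordinal.isSuccLimit_add ν hξlim
        have hνξle : ν + ξl ≤ η := hξle l hlη
        have hHl : H l = E (ν + ξl) := by simp only [hH, if_neg hl', hξldef]
        rw [hHl, hE.2.2 _ ((hsucc _).2 hνξle) hνξlim]
        have hbddE : BddAbove (E '' Set.Iio (ν + ξl)) := by
          refine ⟨η, ?_⟩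
          rintro x ⟨y, hy, rfl⟩
          exact hEle y (le_of_lt (lt_of_lt_of_le hy hνξle))
        have hbddH : BddAbove (H '' Set.Iio l) := by
          refine ⟨η, ?_⟩
          rintro x ⟨y, hy, rfl⟩
          exact hHle y (le_of_lt (lt_of_lt_of_le hy hlη))
        have hνlt : ν < ν + ξl := by
          have := (add_lt_add_iff_left ν).2 hξlim.pos
          rwa [add_zero] at this
        have hμ1l : μ + 1 < l := by
          rw [Ordinal.add_one_eq_succ]; exact hlLim.succ_lt hμl
        have hμ1self : μ < μ + 1 := by
          rw [Ordinal.add_one_eq_succ]; exact Order.lt_succ μ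
        apply le_antisymm
        · refine csSup_le ⟨E ν, ⟨ν, hνlt, rfl⟩⟩ ?_
          rintro x ⟨y, hy, rfl⟩
          by_cases hyν : y ≤ ν
          · have hH1 : H (μ + 1) = E ν := by
              simp only [hH, if_neg (not_le.2 hμ1self), Ordinal.sub_self, add_zero]
            have h1 : E y ≤ E ν :=
              hE.2.1.monotoneOn ((hsucc y).2 (hyν.trans hν.le)) ((hsucc ν).2 hν.le) hyν
            exact h1.trans (hH1 ▸ le_csSup hbddH ⟨μ + 1, hμ1l, rfl⟩)
          · have hνy : ν ≤ y := le_of_not_ge hyν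
            have hyeq : ν + (y - ν) = y := Ordinal.add_sub_cancel_of_le hνy
            have hξlt' : y - ν < ξl := by
              have h2 : ν + (y - ν) < ν + ξl := by rw [hyeq]; exact hy
              exact (add_lt_add_iff_left ν).1 h2
            have hβlt : (μ + 1) + (y - ν) < l := by
              calc (μ + 1) + (y - ν) < (μ + 1) + ξl := (add_lt_add_iff_left _).2 hξlt'
                _ = l := hsplit l hμl
            have hHβ : H ((μ + 1) + (y - ν)) = E y := by
              have hgt : ¬ (μ + 1) + (y - ν) ≤ μ := fun h =>
                absurd (lt_of_lt_of_le (lt_of_lt_of_le hμ1self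
                  (le_self_add (b := y - ν))) h) (lt_irrefl μ)
              simp only [hH, if_neg hgt, Ordinal.add_sub_cancel, hyeq]
            exact hHβ ▸ le_csSup hbddH ⟨(μ + 1) + (y - ν), hβlt, rfl⟩
        · refine csSup_le ⟨H 0, ⟨0, hlLim.pos, rfl⟩⟩ ?_
          rintro x ⟨β, hβ, rfl⟩
          by_cases hβμ : β ≤ μ
          · have h1 : H β ≤ E ν := by
              have h2 := hGltE β hβμ 0 (by rw [add_zero]; exact hν.le)
              rw [add_zero] at h2
              simp only [hH, if_pos hβμ]
              exact h2.le
            exact h1.trans (le_csSup hbddE ⟨ν, hνlt, rfl⟩)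
          · have h1 : H β = E (ν + (β - (μ + 1))) := by simp only [hH, if_neg hβμ]
            have h2 : ν + (β - (μ + 1)) < ν + ξl := by
              have := hξmono β l (not_le.1 hβμ) hβ
              exact this
            exact h1 ▸ le_csSup hbddE ⟨ν + (β - (μ + 1)), h2, rfl⟩
    · -- extends g
      intro β hβ
      simp only [hH, if_pos (show β ≤ μ from Dg.le_max' β hβ)]
      exact hGg β hβ

/-- Let `S ⊆ ω₁`, let `η ∈ S` be additively indecomposable
(`α + β < η` for all `α, β < η`), and suppose the single-point condition `f = {(η, η)}`
belongs to `P_S^B`, witnessed by a strictly increasing continuous `E : η+1 → S` with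
`E η = η`.  Then:
(first conjunct) `(P_S^B)_f = { g ∪ {(η,η)} : g ∈ P_S^B, dom g ∪ ran g ⊆ η }`, stated as:
a condition `h` with domain `D` satisfies `h ∈ P_S^B`, `h ⊇ f` (i.e. `η ∈ D`, `h η = η`)
and `max (dom h) = η` if and only if `η ∈ D`, `h η = η`, and `h` restricted to
`D.erase η` is an element of `P_S^B` whose domain and range lie below `η`;
(second conjunct, "in particular") for every `g ∈ P_S^B` with `dom g ∪ ran g ⊆ η` there
is a strictly increasing continuous `H : η+1 → S ∩ (η+1)` with `H η = η` extending `g`. -/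
theorem baumgartner_restriction_below_indecomposable
    (S : Set Ordinal) (hS : ∀ x ∈ S, x < omegaOne)
    (η : Ordinal) (hηS : η ∈ S)
    (hind : ∀ α < η, ∀ β < η, α + β < η)
    (hf : ∃ E : Ordinal → Ordinal, IsBaumWitness S (η + 1) E ∧ E η = η) :
    (∀ (D : Finset Ordinal) (h : Ordinal → Ordinal),
      (InPB S D h ∧ η ∈ D ∧ h η = η ∧ ∀ β ∈ D, β ≤ η) ↔
        (η ∈ D ∧ h η = η ∧ (∀ β ∈ D.erase η, β < η ∧ h β < η) ∧
          InPB S (D.erase η) h))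
    ∧
    (∀ (Dg : Finset Ordinal) (g : Ordinal → Ordinal), InPB S Dg g →
      (∀ β ∈ Dg, β < η ∧ g β < η) →
      ∃ H : Ordinal → Ordinal, IsBaumWitness S (η + 1) H ∧ (∀ β ≤ η, H β ≤ η) ∧
        H η = η ∧ ∀ β ∈ Dg, H β = g β) := by
  obtain ⟨E, hE, hEη⟩ := hf
  have key := baum_key S η hηS hind E hE hEη
  have hsucc : ∀ x : Ordinal, x < η + 1 ↔ x ≤ η := by
    intro x; rw [Ordinal.add_one_eq_succ, Order.lt_succ_iff]
  refine ⟨?_, key⟩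
  intro D h
  constructor
  · rintro ⟨⟨hdom, α, hα, G, hG, hGh⟩, hηD, hhη, hle⟩
    have hηα : η < α := hα η hηD
    have hltη : ∀ β ∈ D.erase η, β < η ∧ h β < η := by
      intro β hβ
      obtain ⟨hβne, hβD⟩ := Finset.mem_erase.1 hβ
      have hβη : β < η := lt_of_le_of_ne (hle β hβD) hβne
      refine ⟨hβη, ?_⟩
      have : G β < G η := hG.2.1 (hβη.trans hηα) hηα hβη
      rw [hGh β hβD, hGh η hηD, hhη] at this
      exact this
    refine ⟨hηD, hhη, hltη, ⟨fun β hβ => hdom β (Finset.mem_of_mem_erase hβ),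
      α, fun β hβ => hα β (Finset.mem_of_mem_erase hβ),
      G, hG, fun β hβ => hGh β (Finset.mem_of_mem_erase hβ)⟩⟩
  · rintro ⟨hηD, hhη, hbelow, hin⟩
    obtain ⟨H, hH, hHle, hHη, hHext⟩ := key (D.erase η) h hin hbelow
    have hDle : ∀ β ∈ D, β ≤ η := by
      intro β hβ
      by_cases hβη : β = η
      · exact hβη.le
      · exact (hbelow β (Finset.mem_erase.2 ⟨hβη, hβ⟩)).1.le
    refine ⟨⟨?_, η + 1, fun β hβ => (hsucc β).2 (hDle β hβ), H, hH, ?_⟩, hηD, hhη, hDle⟩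
    · intro β hβ
      by_cases hβη : β = η
      · subst hβη
        exact ⟨hS β hηS, by rw [hhη]; exact hηS⟩
      · exact hin.1 β (Finset.mem_erase.2 ⟨hβη, hβ⟩)
    · intro β hβ
      by_cases hβη : β = η
      · subst hβη; rw [hHη, hhη]
      · exact hHext β (Finset.mem_erase.2 ⟨hβη, hβ⟩)
end

section
/- Let S ⊆ ω₁, let g ∈ P_S^B be nonempty with ξ = max(dom g), and let H : ξ+1 → S be a strictly increasing continuous function with H(β) = g(β) for all β ∈ dom g. Let e₀ : ℕ → ξ+1 be surjective with every fiber e₀⁻¹({α}) infinite, and let e₁ : ℕ → H(ξ)+1 be surjective. Then there exist π₁ : ℕ → S ∩ (H(ξ)+1) and π₂ : ℕ → ℕ (one can take π₁ = H ∘ e₀) such that: (i) for all i, if e₀(i) ∈ dom g then π₁(i) = g(e₀(i)); (ii) for all i, j: π₁(i) = π₁(j) if and only if e₀(i) = e₀(j); (iii) for all i, j: π₁(i) < π₁(j) if and only if e₀(i) < e₀(j); (iv) for all i, if e₀(i) is a nonzero limit ordinal then sup{e₁(m) : m ≤ i and e₁(m) < π₁(i)} < π₁(π₂(i)) < π₁(i)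 and e₀(π₂(i)) < e₀(i) (where the supremum of the empty set is 0). -/
/-- Every witness `H : ξ+1 → S` (strictly increasing, continuous, extending
`g`) for a nonempty condition `g ∈ P_S^B` with `ξ = max (dom g)` gives rise to an infinite
branch through the definability tree `T`: given a surjection `e₀ : ℕ → ξ+1` all of whose
fibers are infinite and a surjection `e₁ : ℕ → H(ξ)+1`, there exist
`π₁ : ℕ → S ∩ (H(ξ)+1)` (one can take `π₁ = H ∘ e₀`) and `π₂ : ℕ → ℕ` satisfying
conditions (i)-(iv), where `sup ∅ = 0`. -/
theorem witness_yields_branch (S : Set Ordinal) (hS : ∀ x ∈ S, x < omegaOne)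
    (D : Finset Ordinal) (hD : D.Nonempty) (g : Ordinal → Ordinal)
    (hg : InPB S D g)
    (ξ : Ordinal) (hξ : ξ = D.max' hD)
    (H : Ordinal → Ordinal) (hH : IsBaumWitness S (ξ + 1) H)
    (hHg : ∀ β ∈ D, H β = g β)
    (e₀ : ℕ → Ordinal) (he₀r : ∀ i, e₀ i ≤ ξ)
    (he₀s : ∀ α ≤ ξ, ∃ i, e₀ i = α)
    (he₀f : ∀ α ≤ ξ, {i : ℕ | e₀ i = α}.Infinite)
    (e₁ : ℕ → Ordinal) (he₁r : ∀ i, e₁ i ≤ H ξ) (he₁s : ∀ α ≤ H ξ, ∃ i, e₁ i = α) :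
    ∃ (π₁ : ℕ → Ordinal) (π₂ : ℕ → ℕ),
      (∀ i, π₁ i ∈ S ∧ π₁ i ≤ H ξ) ∧
      (∀ i, e₀ i ∈ D → π₁ i = g (e₀ i)) ∧
      (∀ i j, π₁ i = π₁ j ↔ e₀ i = e₀ j) ∧
      (∀ i j, π₁ i < π₁ j ↔ e₀ i < e₀ j) ∧
      (∀ i, e₀ i ≠ 0 → Order.IsSuccLimit (e₀ i) →
        sSup (e₁ '' {m : ℕ | m ≤ i ∧ e₁ m < π₁ i}) < π₁ (π₂ i) ∧
          π₁ (π₂ i) < π₁ i ∧ e₀ (π₂ i) < e₀ i) := by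
  classical
  obtain ⟨hHS, hHmono, hHcont⟩ := hH
  have hξlt : ξ < ξ + 1 := by
    rw [Ordinal.add_one_eq_succ]; exact Order.lt_succ ξ
  have hlt : ∀ i, e₀ i < ξ + 1 := fun i => lt_of_le_of_lt (he₀r i) hξlt
  set π₁ : ℕ → Ordinal := fun i => H (e₀ i) with hπ₁
  have hle : ∀ i, π₁ i ≤ H ξ := by
    intro i
    rcases eq_or_lt_of_le (he₀r i) with h | h
    · exact le_of_eq (congrArg H h)
    · exact le_of_lt (hHmono (hlt i) hξlt h)
  have key : ∀ i, e₀ i ≠ 0 → Order.IsSuccLimit (e₀ i) → ∃ j,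
      sSup (e₁ '' {m : ℕ | m ≤ i ∧ e₁ m < π₁ i}) < π₁ j ∧ π₁ j < π₁ i ∧ e₀ j < e₀ i := by
    intro i h0 hlim
    have hcont := hHcont (e₀ i) (hlt i) hlim
    set s := sSup (e₁ '' {m : ℕ | m ≤ i ∧ e₁ m < π₁ i}) with hs
    have hslt : s < H (e₀ i) := by
      rcases (e₁ '' {m : ℕ | m ≤ i ∧ e₁ m < π₁ i}).eq_empty_or_nonempty with he | hne
      · rw [hs, he, csSup_empty]
        have h0lt : (0 : Ordinal) < e₀ i := hlim.bot_lt
        have : H 0 < H (e₀ i) :=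
          hHmono (lt_of_le_of_lt (zero_le (a := _)) (hlt i)) (hlt i) h0lt
        exact lt_of_le_of_lt (zero_le (a := _)) this
      · have hfin : (e₁ '' {m : ℕ | m ≤ i ∧ e₁ m < π₁ i}).Finite :=
          Set.Finite.image _ ((Set.finite_le_nat i).subset fun m hm => hm.1)
        have hmem := hne.csSup_mem hfin
        obtain ⟨m, hm, hms⟩ := hmem
        rw [hs, ← hms]; exact hm.2
    rw [hcont] at hslt
    have hne' : (H '' Set.Iio (e₀ i)).Nonempty := ⟨H 0, 0, hlim.bot_lt, rfl⟩
    obtain ⟨x, ⟨β, hβ, rfl⟩, hx⟩ := exists_lt_of_lt_csSup hne' hslt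
    obtain ⟨j, hj⟩ := he₀s β (le_of_lt (lt_of_lt_of_le hβ (he₀r i)))
    refine ⟨j, ?_, ?_, ?_⟩
    · simpa [hπ₁, hj] using hx
    · simp only [hπ₁, hj]
      exact hHmono (lt_of_lt_of_le hβ (le_of_lt (hlt i))) (hlt i) hβ
    · rw [hj]; exact hβ
  refine ⟨π₁, fun i => if h : e₀ i ≠ 0 ∧ Order.IsSuccLimit (e₀ i)
      then (key i h.1 h.2).choose else 0, ?_, ?_, ?_, ?_, ?_⟩
  · exact fun i => ⟨hHS _ (hlt i), hle i⟩
  · intro i hi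
    simp only [hπ₁]
    exact hHg _ hi
  · intro i j
    constructor
    · intro h
      exact hHmono.injOn (hlt i) (hlt j) h
    · intro h; simp [hπ₁, h]
  · intro i j
    exact hHmono.lt_iff_lt (hlt i) (hlt j)
  · intro i h0 hlim
    simp only [dif_pos (show e₀ i ≠ 0 ∧ Order.IsSuccLimit (e₀ i) from ⟨h0, hlim⟩)]
    exact (key i h0 hlim).choose_spec
end

section
/- Fix a bijection π : ℕ → ℕ × ℕ and an injective function s : ℕ → Finset ℕ (an injective enumeration of the finite subsets of ℕ need not be surjective; injectivity suffices). For y ⊆ ℕ define δ(y) = {i ∈ ℕ : there exists m ∈ ℕ with s(i) = y ∩ {0, 1, …, m−1}}. Let β and β′ be nonzero countable ordinals with β ≠ β′, let f : ℕ → β and f′ : ℕ → β′ be surjections, and set y = {k ∈ ℕ : f(i) < f(j) where (i, j) = π(k)} and y′ = {k ∈ ℕ : f′(i) < f′(j) where (i, j) = π(k)}. Then δ(y) ∩ δ(y′) is finite. In particular, the sets δ_β obtained in this way from surjections onto pairwise distinct countable ordinals form an almost disjoint family of subsets of ℕ. -/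
/-- Given an injective enumeration `s : ℕ → Finset ℕ` of finite sets and `y ⊆ ℕ`,
`δ(y) = {i : ∃ m, s i = y ∩ {0,…,m−1}}` (as sets, `{0,…,m−1} = Set.Iio m`). -/
def adReal (s : ℕ → Finset ℕ) (y : Set ℕ) : Set ℕ :=
  {i | ∃ m : ℕ, (↑(s i) : Set ℕ) = y ∩ Set.Iio m}

/-- Given a pairing bijection `π : ℕ → ℕ × ℕ` and `f : ℕ → Ordinal`, the real
`y = {k : f i < f j where (i,j) = π k}` coding the order induced by `f`. -/
def ordRelReal (π : ℕ → ℕ × ℕ) (f : ℕ → Ordinal) : Set ℕ :=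
  {k | f (π k).1 < f (π k).2}

/-- If `y ≠ y'` then `δ(y) ∩ δ(y')` is finite: any point of difference `n` forces one
of the two witnesses `m, m'` to be `≤ n`, leaving only finitely many possible values
of `s i`, hence (by injectivity of `s`) finitely many possible `i`. -/
lemma adReal_finite_of_ne (s : ℕ → Finset ℕ) (hs : Function.Injective s)
    (y y' : Set ℕ) (h : y ≠ y') :
    (adReal s y ∩ adReal s y').Finite := by
  have hex : ∃ n, ¬ (n ∈ y ↔ n ∈ y') := by
    by_contra hc
    push_neg at hc
    exact h (Set.ext fun n => hc n)
  obtain ⟨n, hn⟩ := hex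
  have hsub : adReal s y ∩ adReal s y' ⊆
      ⋃ m ∈ Finset.range (n+1),
        ({i | (↑(s i) : Set ℕ) = y ∩ Set.Iio m} ∪
         {i | (↑(s i) : Set ℕ) = y' ∩ Set.Iio m}) := by
    rintro i ⟨⟨m, hm⟩, ⟨m', hm'⟩⟩
    have key : m ≤ n ∨ m' ≤ n := by
      by_contra hc
      push_neg at hc
      refine hn ⟨fun hny => ?_, fun hny' => ?_⟩
      · have h1 : n ∈ (↑(s i) : Set ℕ) := by rw [hm]; exact ⟨hny, hc.1⟩
        rw [hm'] at h1; exact h1.1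
      · have h1 : n ∈ (↑(s i) : Set ℕ) := by rw [hm']; exact ⟨hny', hc.2⟩
        rw [hm] at h1; exact h1.1
    rcases key with hk | hk
    · exact Set.mem_biUnion (Finset.mem_range.mpr (Nat.lt_succ_of_le hk)) (Or.inl hm)
    · exact Set.mem_biUnion (Finset.mem_range.mpr (Nat.lt_succ_of_le hk)) (Or.inr hm')
  refine Set.Finite.subset ?_ hsub
  refine Set.Finite.biUnion (Finset.range (n+1)).finite_toSet ?_
  intro m _
  refine Set.Finite.union ?_ ?_ <;>
  · refine Set.Subsingleton.finite ?_
    intro a ha b hb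
    exact hs (Finset.coe_injective (ha.trans hb.symm))

/-- If two surjections onto ordinals `β, β'` induce the same order-coding real, then
`β = β'` (by well-founded induction, `f = f'`, hence their ranges coincide). -/
lemma eq_of_ordRelReal_eq (π : ℕ → ℕ × ℕ) (hπ : Function.Bijective π)
    (β β' : Ordinal) (f f' : ℕ → Ordinal)
    (hf : ∀ i, f i < β) (hfs : ∀ γ < β, ∃ i, f i = γ)
    (hf' : ∀ i, f' i < β') (hfs' : ∀ γ < β', ∃ i, f' i = γ)
    (h : ordRelReal π f = ordRelReal π f') : β = β' := by
  have hiff : ∀ i j, f i < f j ↔ f' i < f' j := by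
    intro i j
    obtain ⟨k, hk⟩ := hπ.2 (i, j)
    have := Set.ext_iff.mp h k
    simpa [ordRelReal, hk] using this
  have heq : ∀ γ : Ordinal, ∀ i, f i = γ → f' i = γ := by
    intro γ
    induction γ using Ordinal.induction with
    | h γ IH =>
    intro i hi
    subst hi
    by_contra hne
    rcases lt_or_gt_of_ne hne with hlt | hlt
    · -- f' i < f i
      obtain ⟨j, hj⟩ := hfs (f' i) (hlt.trans (hf i))
      have hji : f j < f i := by rw [hj]; exact hlt
      have : f' j < f' i := (hiff j i).mp hji
      rw [IH (f j) hji j rfl, hj] at this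
      exact lt_irrefl _ this
    · -- f i < f' i
      obtain ⟨j, hj⟩ := hfs' (f i) (hlt.trans (hf' i))
      have hji : f' j < f' i := by rw [hj]; exact hlt
      have hfji : f j < f i := (hiff j i).mpr hji
      have := IH (f j) hfji j rfl
      rw [this] at hj
      exact lt_irrefl _ (hj ▸ hfji)
  apply le_antisymm
  · refine le_of_forall_lt (fun γ hγ => ?_)
    obtain ⟨i, hi⟩ := hfs γ hγ
    rw [← heq γ i hi]
    exact hf' i
  · refine le_of_forall_lt (fun γ hγ => ?_)
    obtain ⟨i, hi⟩ := hfs' γ hγ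
    have : f' i = f i := heq (f i) i rfl
    rw [← hi, this]
    exact hf i

/-- Fix a bijection `π : ℕ → ℕ × ℕ` and an injective `s : ℕ → Finset ℕ`.
Let `β ≠ β'` be nonzero countable ordinals, `f : ℕ → β` and `f' : ℕ → β'` surjections,
and let `y, y'` be the reals coding the induced orders.  Then `δ(y) ∩ δ(y')` is finite.
In particular (second conjunct), for any family of surjections `F a : ℕ → B a` onto
pairwise distinct nonzero countable ordinals `B a`, the sets `δ(ordRelReal π (F a))` form
an almost disjoint family of subsets of ℕ. -/
theorem adReal_almost_disjoint (π : ℕ → ℕ × ℕ) (hπ : Function.Bijective π)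
    (s : ℕ → Finset ℕ) (hs : Function.Injective s) :
    (∀ β β' : Ordinal, β ≠ 0 → β' ≠ 0 → β < omegaOne → β' < omegaOne → β ≠ β' →
      ∀ f f' : ℕ → Ordinal,
        (∀ i, f i < β) → (∀ γ < β, ∃ i, f i = γ) →
        (∀ i, f' i < β') → (∀ γ < β', ∃ i, f' i = γ) →
        (adReal s (ordRelReal π f) ∩ adReal s (ordRelReal π f')).Finite)
    ∧
    (∀ {ι : Type} (B : ι → Ordinal) (F : ι → ℕ → Ordinal),
      (∀ a, B a ≠ 0) → (∀ a, B a < omegaOne) → Function.Injective B →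
      (∀ a i, F a i < B a) → (∀ a, ∀ γ < B a, ∃ i, F a i = γ) →
      ∀ a b, a ≠ b →
        (adReal s (ordRelReal π (F a)) ∩ adReal s (ordRelReal π (F b))).Finite) := by
  constructor
  · intro β β' _ _ _ _ hne f f' hf hfs hf' hfs'
    refine adReal_finite_of_ne s hs _ _ (fun hyy => ?_)
    exact hne (eq_of_ordRelReal_eq π hπ β β' f f' hf hfs hf' hfs' hyy)
  · intro ι B F _ _ hBinj hF hFs a b hab
    refine adReal_finite_of_ne s hs _ _ (fun hyy => ?_)
    exact hab (hBinj (eq_of_ordRelReal_eq π hπ (B a) (B b) (F a) (F b)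
      (hF a) (hFs a) (hF b) (hFs b) hyy))
end
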